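/- Let B be a real Banach space and {x_k}_{k=1}^∞ a sequence in B that is a basis for B, i.e., for each x ∈ B there exist unique scalars p_k(x) ∈ ℝ such that x = Σ_{k=1}^∞ p_k(x)·x_k, where the series converges in norm (the partial sums Σ_{k=1}^n p_k(x)·x_k converge to x). Then for every k, the coordinate functional p_k : B → ℝ is a continuous (bounded) linear functional; that is, every basis of a Banach space is a Schauder basis. -/

import Mathlib

open Filter

open BoundedContinuousFunction

section aux
variable {B : Type*} [NormedAddCommGroup B] [NormedSpace ℝ B] [CompleteSpace B]

/-- The submodule of `ℕ →ᵇ B` of partial-sum sequences of admissible coefficient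
sequences w.r.t. `x`. -/
noncomputable def schauderZ (x : ℕ → B) : Submodule ℝ (ℕ →ᵇ B) where
  carrier := {f | f 0 = 0 ∧ (∀ n, f (n+1) - f n ∈ Submodule.span ℝ {x n}) ∧ CauchySeq ⇑f}
  zero_mem' := ⟨rfl, fun n => by simp, cauchySeq_const 0⟩
  add_mem' := by
    intro f g hf hg
    refine ⟨by simp [hf.1, hg.1], fun n => ?_, ?_⟩
    · have := Submodule.add_mem _ (hf.2.1 n) (hg.2.1 n)
      simpa [add_sub_add_comm] using this
    · simpa using hf.2.2.add hg.2.2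
  smul_mem' := by
    intro c f hf
    refine ⟨by simp [hf.1], fun n => ?_, ?_⟩
    · have := Submodule.smul_mem _ c (hf.2.1 n)
      simpa [smul_sub] using this
    · simpa [Function.comp_def] using (uniformContinuous_const_smul c).comp_cauchySeq hf.2.2

lemma schauderZ_isClosed (x : ℕ → B) : IsClosed ((schauderZ x : Set (ℕ →ᵇ B))) := by
  have h1 : IsClosed {f : ℕ →ᵇ B | f 0 = 0} :=
    isClosed_eq ((BoundedContinuousFunction.lipschitz_eval_const 0).continuous) continuous_const
  have h2 : ∀ n : ℕ, IsClosed {f : ℕ →ᵇ B | f (n+1) - f n ∈ Submodule.span ℝ {x n}} := by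
    intro n
    exact IsClosed.preimage (((BoundedContinuousFunction.lipschitz_eval_const (n+1)).continuous).sub ((BoundedContinuousFunction.lipschitz_eval_const n).continuous))
      (Submodule.closed_of_finiteDimensional _)
  have h3 : IsClosed {f : ℕ →ᵇ B | CauchySeq ⇑f} := by
    rw [← isSeqClosed_iff_isClosed]
    intro F f hF hFf
    simp only [Set.mem_setOf_eq] at hF ⊢
    rw [Metric.cauchySeq_iff]
    intro ε hε
    obtain ⟨m, hm⟩ := (Metric.tendsto_atTop.mp hFf (ε/3) (by linarith)).imp (fun m h => h m le_rfl)
    obtain ⟨N, hN⟩ := Metric.cauchySeq_iff.mp (hF m) (ε/3) (by linarith)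
    refine ⟨N, fun a ha b hb => ?_⟩
    have h1 : dist (f a) ((F m) a) ≤ dist f (F m) := dist_coe_le_dist a
    have h2 : dist ((F m) b) (f b) ≤ dist (F m) f := dist_coe_le_dist b
    have := hN a ha b hb
    have hd : dist f (F m) < ε/3 := by rw [dist_comm]; exact hm
    calc dist (f a) (f b) ≤ dist (f a) ((F m) a) + dist ((F m) a) ((F m) b) + dist ((F m) b) (f b) :=
          dist_triangle4 _ _ _ _
      _ < ε/3 + ε/3 + ε/3 := by
          have hA : dist (f a) ((F m) a) < ε/3 := h1.trans_lt hd
          have hB : dist ((F m) b) (f b) < ε/3 := h2.trans_lt (by rw [dist_comm]; exact hd)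
          exact add_lt_add (add_lt_add hA this) hB
      _ = ε := by ring
  have : (schauderZ x : Set (ℕ →ᵇ B)) =
      ({f : ℕ →ᵇ B | f 0 = 0} ∩ ⋂ n, {f | f (n+1) - f n ∈ Submodule.span ℝ {x n}})
        ∩ {f | CauchySeq ⇑f} := by
    ext f
    simp only [Set.mem_inter_iff, Set.mem_iInter, Set.mem_setOf_eq]
    exact ⟨fun h => ⟨⟨h.1, h.2.1⟩, h.2.2⟩, fun h => ⟨h.1.1, h.1.2, h.2⟩⟩
  rw [this]
  exact ((h1.inter (isClosed_iInter h2)).inter h3)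

end aux

/-- Every basis of a Banach space is a Schauder basis: if each `v` has a unique
expansion `v = ∑ k, p k v • x k` (partial sums converging in norm), then the
coordinate functionals are continuous linear functionals. -/
theorem basis_is_schauder_basis
    {B : Type*} [NormedAddCommGroup B] [NormedSpace ℝ B] [CompleteSpace B]
    (x : ℕ → B)
    (hbasis : ∀ v : B, ∃! c : ℕ → ℝ,
      Tendsto (fun n => ∑ k ∈ Finset.range n, c k • x k) atTop (nhds v)) :
    ∃ p : ℕ → B →L[ℝ] ℝ, ∀ v : B,
      Tendsto (fun n => ∑ k ∈ Finset.range n, p k v • x k) atTop (nhds v) := by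
  classical
  -- x k ≠ 0
  have hxne : ∀ k, x k ≠ 0 := by
    intro k hk
    obtain ⟨c, hc, hu⟩ := hbasis 0
    have h0 : Tendsto (fun n => ∑ j ∈ Finset.range n,
        (fun _ => (0 : ℝ)) j • x j) atTop (nhds (0:B)) := by
      simpa using (tendsto_const_nhds : Tendsto (fun _ : ℕ => (0:B)) atTop (nhds 0))
    have h1 : Tendsto (fun n => ∑ j ∈ Finset.range n,
        (fun i => if i = k then (1:ℝ) else 0) j • x j) atTop (nhds (0:B)) := by
      have : ∀ n, ∑ j ∈ Finset.range n, (fun i => if i = k then (1:ℝ) else 0) j • x j = 0 := by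
        intro n
        apply Finset.sum_eq_zero
        intro j _
        by_cases h : j = k <;> simp [h, hk]
      exact Tendsto.congr (fun n => (this n).symm)
        (tendsto_const_nhds : Tendsto (fun _ : ℕ => (0:B)) atTop (nhds 0))
    have e0 := hu (fun _ => (0:ℝ)) h0
    have e1 := hu (fun i => if i = k then (1:ℝ) else 0) h1
    have : (fun i => if i = k then (1:ℝ) else 0) = (fun _ => (0:ℝ)) := e1.trans e0.symm
    simpa using congrFun this k
  set Z := schauderZ x with hZ
  haveI : CompleteSpace Z := (schauderZ_isClosed x).completeSpace_coe
  -- the limit map T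
  have hlim : ∀ f : Z, Tendsto ⇑f.1 atTop (nhds (limUnder atTop ⇑f.1)) := by
    intro f
    obtain ⟨v, hv⟩ := cauchySeq_tendsto_of_complete f.2.2.2
    rwa [hv.limUnder_eq]
  let T : Z →L[ℝ] B := LinearMap.mkContinuous
    { toFun := fun f => limUnder atTop ⇑f.1
      map_add' := fun f g => tendsto_nhds_unique (hlim (f+g))
        (((hlim f).add (hlim g)).congr (fun n => by simp))
      map_smul' := fun c f => tendsto_nhds_unique (hlim (c • f))
        (((hlim f).const_smul c).congr (fun n => by simp)) } 1 (by
      intro f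
      rw [one_mul]
      exact le_of_tendsto (hlim f).norm
        (Eventually.of_forall fun n => f.1.norm_coe_le_norm n))
  have hT : ∀ f : Z, Tendsto ⇑f.1 atTop (nhds (T f)) := hlim
  -- coefficients
  have hspec : ∀ (f : Z) (n : ℕ), ∃ c : ℝ, c • x n = f.1 (n+1) - f.1 n := by
    intro f n
    exact Submodule.mem_span_singleton.mp (f.2.2.1 n)
  let coef : Z → ℕ → ℝ := fun f n => (hspec f n).choose
  have hcoef : ∀ (f : Z) (n : ℕ), coef f n • x n = f.1 (n+1) - f.1 n := fun f n => (hspec f n).choose_spec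
  have hsum : ∀ (f : Z) (n : ℕ), ∑ k ∈ Finset.range n, coef f k • x k = f.1 n := by
    intro f n
    induction n with
    | zero => simp [f.2.1]
    | succ n ih => rw [Finset.sum_range_succ, ih, hcoef]; abel
  -- bijectivity of T
  have hinj : Function.Injective T := by
    intro f g hfg
    have h1 : Tendsto (fun n => ∑ k ∈ Finset.range n, coef f k • x k) atTop (nhds (T f)) := by
      simp only [hsum]; exact hT f
    have h2 : Tendsto (fun n => ∑ k ∈ Finset.range n, coef g k • x k) atTop (nhds (T f)) := by
      simp only [hsum]; rw [hfg]; exact hT g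
    obtain ⟨c, hc, hu⟩ := hbasis (T f)
    have : coef f = coef g := (hu _ h1).trans (hu _ h2).symm
    have hfg' : ∀ n, f.1 n = g.1 n := by
      intro n; rw [← hsum f n, ← hsum g n, this]
    exact Subtype.ext (BoundedContinuousFunction.ext hfg')
  have hsurj : Function.Surjective T := by
    intro v
    obtain ⟨c, hc, -⟩ := hbasis v
    have hcauchy : CauchySeq (fun n => ∑ k ∈ Finset.range n, c k • x k) := hc.cauchySeq
    obtain ⟨C, hC⟩ := hcauchy.isBounded_range.exists_norm_le
    let g : ℕ →ᵇ B := BoundedContinuousFunction.ofNormedAddCommGroup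
      (fun n => ∑ k ∈ Finset.range n, c k • x k) (continuous_of_discreteTopology) C
      (fun n => hC _ (Set.mem_range_self n))
    have hg : g ∈ Z := by
      refine ⟨by simp [g], fun n => ?_, ?_⟩
      · apply Submodule.mem_span_singleton.mpr
        refine ⟨c n, ?_⟩
        show c n • x n = (∑ k ∈ Finset.range (n+1), c k • x k) - ∑ k ∈ Finset.range n, c k • x k
        rw [Finset.sum_range_succ]; abel
      · exact hcauchy
    refine ⟨⟨g, hg⟩, ?_⟩
    exact tendsto_nhds_unique (hT ⟨g, hg⟩) hc
  -- T as a continuous linear equiv, via the open mapping theorem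
  let e : Z ≃L[ℝ] B :=
    LinearEquiv.toContinuousLinearEquivOfContinuous
      (LinearEquiv.ofBijective (T : Z →ₗ[ℝ] B) ⟨hinj, hsurj⟩) T.continuous
  have he : ∀ f : Z, e f = T f := fun f => rfl
  have hesymm : ∀ v : B, T (e.symm v) = v := by
    intro v
    rw [← he]; exact e.apply_symm_apply v
  -- coefficient functionals on Z
  have hcoef_add : ∀ (f g : Z) (n : ℕ), coef (f + g) n = coef f n + coef g n := by
    intro f g n
    apply smul_left_injective ℝ (hxne n)
    show coef (f+g) n • x n = (coef f n + coef g n) • x n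
    rw [hcoef, add_smul, hcoef, hcoef]
    show (f.1 + g.1) (n+1) - (f.1 + g.1) n = _
    simp only [BoundedContinuousFunction.coe_add, Pi.add_apply]
    abel
  have hcoef_smul : ∀ (c : ℝ) (f : Z) (n : ℕ), coef (c • f) n = c * coef f n := by
    intro c f n
    apply smul_left_injective ℝ (hxne n)
    show coef (c • f) n • x n = (c * coef f n) • x n
    rw [hcoef, mul_smul, hcoef]
    show (c • f.1) (n+1) - (c • f.1) n = _
    simp only [BoundedContinuousFunction.coe_smul, Pi.smul_apply, smul_sub]
  have hcoef_bound : ∀ (f : Z) (n : ℕ), |coef f n| ≤ 2 / ‖x n‖ * ‖f‖ := by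
    intro f n
    have hx : 0 < ‖x n‖ := norm_pos_iff.mpr (hxne n)
    have : |coef f n| * ‖x n‖ = ‖f.1 (n+1) - f.1 n‖ := by
      rw [← hcoef f n, norm_smul, Real.norm_eq_abs]
    have hb : ‖f.1 (n+1) - f.1 n‖ ≤ 2 * ‖f‖ := by
      calc ‖f.1 (n+1) - f.1 n‖ ≤ ‖f.1 (n+1)‖ + ‖f.1 n‖ := norm_sub_le _ _
        _ ≤ ‖f.1‖ + ‖f.1‖ := add_le_add (f.1.norm_coe_le_norm _) (f.1.norm_coe_le_norm _)
        _ = 2 * ‖f‖ := by rw [two_mul]; rfl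
    rw [div_mul_eq_mul_div, le_div_iff₀ hx]
    calc |coef f n| * ‖x n‖ = ‖f.1 (n+1) - f.1 n‖ := this
      _ ≤ 2 * ‖f‖ := hb
      _ = 2 * ‖f‖ := rfl
  let q : ℕ → Z →L[ℝ] ℝ := fun n => LinearMap.mkContinuous
    { toFun := fun f => coef f n
      map_add' := fun f g => hcoef_add f g n
      map_smul' := fun c f => hcoef_smul c f n } (2 / ‖x n‖) (by
      intro f
      simpa [Real.norm_eq_abs] using hcoef_bound f n)
  refine ⟨fun n => (q n).comp (e.symm : B →L[ℝ] Z), ?_⟩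
  intro v
  have : ∀ n, ((q n).comp (e.symm : B →L[ℝ] Z)) v = coef (e.symm v) n := fun n => rfl
  simp only [this]
  have hsum' : (fun n => ∑ k ∈ Finset.range n, coef (e.symm v) k • x k) = fun n => (e.symm v).1 n := by
    funext n; exact hsum (e.symm v) n
  rw [hsum']
  have := hT (e.symm v)
  rwa [hesymm v] at this
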